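/- Let γ and γ⊥ be orthonormal vectors in ℂ², let θ ∈ ℝ, and set φ = (γ + e^{iθ}γ⊥)/√2 and ψ = (γ + e^{i(θ+π/2)}γ⊥)/√2 (mutually unbiased pre- and post-selection). Let φ⊥ be a unit vector orthogonal to φ, let p ∈ [0,1), and set ρ := (1−p)|φ⟩⟨φ| + p|φ⊥⟩⟨φ⊥|. For ε ∈ {+1,−1}, let H^ε := ((1−ε√2)/2)·I + (ε√2/2)·(|φ⟩⟨φ| + |ψ⟩⟨ψ|). Then |Im(W_{φ,ψ}(|γ⟩⟨γ|)) − Im(W_{ρ,ψ}(|γ⟩⟨γ|))| ≥ |Re(W_{φ,ψ}(H^ε)) − Re(W_{ρ,ψ}(H^ε))|, with equality if and only if p = 0. -/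

import Mathlib

noncomputable section

/-- The rank-one projector `|v⟩⟨v|` with entries `v i * conj (v j)`. -/
def proj (v : EuclideanSpace ℂ (Fin 2)) : Matrix (Fin 2) (Fin 2) ℂ :=
  Matrix.of fun i j => v i * star (v j)

/-- Matrix-vector multiplication, valued in `EuclideanSpace ℂ (Fin 2)`. -/
def mulVecE (M : Matrix (Fin 2) (Fin 2) ℂ) (v : EuclideanSpace ℂ (Fin 2)) :
    EuclideanSpace ℂ (Fin 2) :=
  (WithLp.equiv 2 (Fin 2 → ℂ)).symm (M.mulVec ((WithLp.equiv 2 (Fin 2 → ℂ)) v))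

/-- The weak value `W_{φ,ψ}(M) = ⟨ψ, Mφ⟩ / ⟨ψ, φ⟩`. -/
def weak (φ ψ : EuclideanSpace ℂ (Fin 2)) (M : Matrix (Fin 2) (Fin 2) ℂ) : ℂ :=
  (inner ℂ ψ (mulVecE M φ) : ℂ) / (inner ℂ ψ φ : ℂ)

/-- The generalized weak value `W_{ρ,ψ}(M) = Tr(|ψ⟩⟨ψ| M ρ) / Tr(|ψ⟩⟨ψ| ρ)`. -/
def gweak (ρ : Matrix (Fin 2) (Fin 2) ℂ) (ψ : EuclideanSpace ℂ (Fin 2))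
    (M : Matrix (Fin 2) (Fin 2) ℂ) : ℂ :=
  (proj ψ * M * ρ).trace / (proj ψ * ρ).trace

lemma inner_eq (x y : EuclideanSpace ℂ (Fin 2)) :
    (inner ℂ x y : ℂ) = star (x 0) * y 0 + star (x 1) * y 1 := by
  simp [PiLp.inner_apply, Fin.sum_univ_two, RCLike.inner_apply, mul_comm]

lemma trace_proj_mul (x v : EuclideanSpace ℂ (Fin 2)) :
    (proj x * proj v).trace = (inner ℂ v x : ℂ) * (inner ℂ x v : ℂ) := by
  simp [proj, Matrix.trace, Matrix.mul_apply, Fin.sum_univ_two, inner_eq, Matrix.diag]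
  ring

lemma trace_proj_mul_mul (x v : EuclideanSpace ℂ (Fin 2)) (M : Matrix (Fin 2) (Fin 2) ℂ) :
    (proj x * M * proj v).trace = (inner ℂ v x : ℂ) * (inner ℂ x (mulVecE M v) : ℂ) := by
  simp [proj, mulVecE, Matrix.trace, Matrix.mul_apply, Fin.sum_univ_two, inner_eq,
    Matrix.diag, Matrix.mulVec, dotProduct]
  ring

lemma mulVecE_proj (u v : EuclideanSpace ℂ (Fin 2)) :
    mulVecE (proj u) v = (inner ℂ u v : ℂ) • u := by
  ext i
  fin_cases i <;>
  simp [proj, mulVecE, Matrix.mulVec, dotProduct, Fin.sum_univ_two, inner_eq] <;> ring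

lemma mulVecE_one (v : EuclideanSpace ℂ (Fin 2)) : mulVecE 1 v = v := by
  ext i; simp [mulVecE]

lemma mulVecE_add (M N : Matrix (Fin 2) (Fin 2) ℂ) (v : EuclideanSpace ℂ (Fin 2)) :
    mulVecE (M + N) v = mulVecE M v + mulVecE N v := by
  ext i; fin_cases i <;> simp [mulVecE, Matrix.add_mulVec] <;> ring

lemma mulVecE_smul (c : ℂ) (M : Matrix (Fin 2) (Fin 2) ℂ) (v : EuclideanSpace ℂ (Fin 2)) :
    mulVecE (c • M) v = c • mulVecE M v := by
  ext i; fin_cases i <;> simp [mulVecE, Matrix.smul_mulVec] <;> ring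


lemma parseval (γ γperp x : EuclideanSpace ℂ (Fin 2))
    (hγ : ‖γ‖ = 1) (hγp : ‖γperp‖ = 1) (horth : (inner ℂ γ γperp : ℂ) = 0)
    (hx : ‖x‖ = 1) :
    (inner ℂ x γ : ℂ) * (inner ℂ γ x : ℂ) + (inner ℂ x γperp : ℂ) * (inner ℂ γperp x : ℂ) = 1 := by
  have horth2 : (inner ℂ γperp γ : ℂ) = 0 := by rw [← inner_conj_symm, horth]; simp
  have hON : Orthonormal ℂ ![γ, γperp] := by
    rw [orthonormal_iff_ite]
    intro i j
    fin_cases i <;> fin_cases j <;>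
      simp_all [inner_self_eq_norm_sq_to_K]
  have hcard : Fintype.card (Fin 2) = Module.finrank ℂ (EuclideanSpace ℂ (Fin 2)) := by
    simp [finrank_euclideanSpace]
  let B := basisOfOrthonormalOfCardEqFinrank hON hcard
  have hB : ⇑B = ![γ, γperp] := coe_basisOfOrthonormalOfCardEqFinrank hON hcard
  let ob : OrthonormalBasis (Fin 2) ℂ (EuclideanSpace ℂ (Fin 2)) :=
    B.toOrthonormalBasis (by rwa [hB])
  have hsum := ob.sum_inner_mul_inner x x
  rw [inner_self_eq_norm_sq_to_K, hx] at hsum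
  have hob : ⇑ob = ![γ, γperp] := by
    simp [ob, Module.Basis.coe_toOrthonormalBasis, hB]
  rw [Fin.sum_univ_two, hob] at hsum
  simpa using hsum

set_option maxHeartbeats 1000000 in
/-- for mutually unbiased pre- and post-selection and depolarizing noise of
strength `p ∈ [0,1)`, the attenuation of the imaginary component of the weak value of
`|γ⟩⟨γ|` is at least as large as the attenuation of the real component of the weak value
of `H^ε`, with equality iff `p = 0`. -/
theorem stmt15 (γ γperp : EuclideanSpace ℂ (Fin 2))
    (hγ : ‖γ‖ = 1) (hγp : ‖γperp‖ = 1) (horth : (inner ℂ γ γperp : ℂ) = 0)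
    (θ : ℝ)
    (φ ψ : EuclideanSpace ℂ (Fin 2))
    (hφ : φ = (Real.sqrt 2 : ℂ)⁻¹ • (γ + Complex.exp (θ * Complex.I) • γperp))
    (hψ : ψ = (Real.sqrt 2 : ℂ)⁻¹ •
        (γ + Complex.exp ((θ + Real.pi / 2) * Complex.I) • γperp))
    (φperp : EuclideanSpace ℂ (Fin 2))
    (hφperp : ‖φperp‖ = 1) (horth' : (inner ℂ φ φperp : ℂ) = 0)
    (p : ℝ) (hp : p ∈ Set.Ico (0 : ℝ) 1)
    (ρ : Matrix (Fin 2) (Fin 2) ℂ)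
    (hρ : ρ = ((1 - p : ℝ) : ℂ) • proj φ + ((p : ℝ) : ℂ) • proj φperp)
    (ε : ℝ) (hε : ε = 1 ∨ ε = -1)
    (H : Matrix (Fin 2) (Fin 2) ℂ)
    (hH : H = (((1 - ε * Real.sqrt 2) / 2 : ℝ) : ℂ) • (1 : Matrix (Fin 2) (Fin 2) ℂ)
        + ((ε * Real.sqrt 2 / 2 : ℝ) : ℂ) • (proj φ + proj ψ)) :
    |(weak φ ψ (proj γ)).im - (gweak ρ ψ (proj γ)).im| ≥
        |(weak φ ψ H).re - (gweak ρ ψ H).re| ∧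
      (|(weak φ ψ (proj γ)).im - (gweak ρ ψ (proj γ)).im| =
          |(weak φ ψ H).re - (gweak ρ ψ H).re| ↔ p = 0) := by
  obtain ⟨hp0, hp1⟩ := hp
  have hss : Real.sqrt 2 * Real.sqrt 2 = 2 := Real.mul_self_sqrt (by norm_num)
  have hsnn : (0:ℝ) ≤ Real.sqrt 2 := Real.sqrt_nonneg 2
  set c : ℂ := ((Real.sqrt 2 : ℝ) : ℂ)⁻¹ with hc_def
  have hsC : ((Real.sqrt 2 : ℝ) : ℂ) * ((Real.sqrt 2 : ℝ) : ℂ) = 2 := by exact_mod_cast hss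
  have hcc : c * c = 1/2 := by rw [hc_def, ← mul_inv, hsC]; norm_num
  have hcs : (starRingEnd ℂ) c = c := by rw [hc_def]; simp
  have hc0 : c ≠ 0 := by
    rw [hc_def]
    exact inv_ne_zero (by exact_mod_cast (Real.sqrt_pos.mpr (by norm_num)).ne')
  set e : ℂ := Complex.exp (θ * Complex.I) with he_def
  have he : (starRingEnd ℂ) e * e = 1 := by
    rw [he_def, ← Complex.exp_conj, ← Complex.exp_add]; simp
  have hexp : Complex.exp ((θ + Real.pi / 2) * Complex.I) = Complex.I * e := by
    rw [he_def]
    push_cast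
    rw [add_mul, Complex.exp_add, mul_comm]
    congr 1
    rw [Complex.exp_mul_I]
    simp [← Complex.ofReal_cos, ← Complex.ofReal_sin]
  rw [hexp] at hψ
  have hgg : (inner ℂ γ γ : ℂ) = 1 := by rw [inner_self_eq_norm_sq_to_K, hγ]; norm_num
  have hpp : (inner ℂ γperp γperp : ℂ) = 1 := by rw [inner_self_eq_norm_sq_to_K, hγp]; norm_num
  have horth2 : (inner ℂ γperp γ : ℂ) = 0 := by rw [← inner_conj_symm, horth]; simp
  have hγφ : (inner ℂ γ φ : ℂ) = c := by
    rw [hφ]; simp [inner_add_right, inner_smul_right, hgg, horth, hγ]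
  have hψγ : (inner ℂ ψ γ : ℂ) = c := by
    rw [hψ]; simp [inner_add_left, inner_smul_left, hgg, horth2, hcs, hγ]
  have hψφ : (inner ℂ ψ φ : ℂ) = (1 - Complex.I)/2 := by
    rw [hψ, hφ]
    simp only [inner_add_right, inner_add_left, inner_smul_right, inner_smul_left,
      hgg, hpp, horth, horth2, map_mul, Complex.conj_I, hcs]
    linear_combination (-Complex.I*c*c) * he + (1 - Complex.I) * hcc
  have hφψ : (inner ℂ φ ψ : ℂ) = (1 + Complex.I)/2 := by
    rw [← inner_conj_symm, hψφ]
    simp [map_div₀, Complex.conj_I, sub_neg_eq_add, map_ofNat]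
  have hφφ : (inner ℂ φ φ : ℂ) = 1 := by
    rw [hφ]
    simp only [inner_add_right, inner_add_left, inner_smul_right, inner_smul_left,
      hgg, hpp, horth, horth2, map_mul, hcs]
    linear_combination (c*c) * he + 2 * hcc
  have hψψ : (inner ℂ ψ ψ : ℂ) = 1 := by
    rw [hψ]
    simp only [inner_add_right, inner_add_left, inner_smul_right, inner_smul_left,
      hgg, hpp, horth, horth2, map_mul, Complex.conj_I, hcs]
    linear_combination (-c*c*((starRingEnd ℂ) e * e))*Complex.I_sq + (c*c)*he + 2*hcc
  -- φperp components
  have ha : (inner ℂ γ φperp : ℂ) = -((starRingEnd ℂ) e) * (inner ℂ γperp φperp : ℂ) := by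
    rw [hφ] at horth'
    simp only [inner_add_left, inner_smul_left, map_mul, hcs] at horth'
    rcases mul_eq_zero.mp horth' with h | h
    · exact absurd h hc0
    · linear_combination h
  have hsa : (starRingEnd ℂ) (inner ℂ γ φperp : ℂ)
      = -e * (starRingEnd ℂ) (inner ℂ γperp φperp : ℂ) := by
    rw [ha]; simp
  -- Parseval
  have hpar := parseval γ γperp φperp hγ hγp horth hφperp
  have hpar' : (starRingEnd ℂ) (inner ℂ γ φperp : ℂ) * (inner ℂ γ φperp : ℂ)
      + (starRingEnd ℂ) (inner ℂ γperp φperp : ℂ) * (inner ℂ γperp φperp : ℂ) = 1 := by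
    rw [inner_conj_symm, inner_conj_symm]
    exact hpar
  have hbb : (starRingEnd ℂ) (inner ℂ γperp φperp : ℂ) * (inner ℂ γperp φperp : ℂ) = 1/2 := by
    rw [hsa, ha] at hpar'
    linear_combination (1/2)*hpar'
      - ((1/2)*((starRingEnd ℂ) (inner ℂ γperp φperp : ℂ) * (inner ℂ γperp φperp : ℂ)))*he
  have hψφp : (inner ℂ ψ φperp : ℂ)
      = -(c * (starRingEnd ℂ) e * (inner ℂ γperp φperp : ℂ)) * (1 + Complex.I) := by
    rw [hψ]
    simp only [inner_add_left, inner_smul_left, map_mul, Complex.conj_I, hcs]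
    linear_combination c * ha
  have hφpψ : (inner ℂ φperp ψ : ℂ)
      = -(c * e * (starRingEnd ℂ) (inner ℂ γperp φperp : ℂ)) * (1 - Complex.I) := by
    rw [← inner_conj_symm, hψφp]
    simp only [map_neg, map_mul, map_add, map_one, Complex.conj_I, Complex.conj_conj, hcs]
    ring
  have P1 : (inner ℂ φperp ψ : ℂ) * (inner ℂ ψ φperp : ℂ) = 1/2 := by
    rw [hψφp, hφpψ]
    linear_combination (-(c*c*e*((starRingEnd ℂ) e)
        * ((starRingEnd ℂ) (inner ℂ γperp φperp : ℂ) * (inner ℂ γperp φperp : ℂ))))*Complex.I_sq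
      + (2*c*c*((starRingEnd ℂ) (inner ℂ γperp φperp : ℂ) * (inner ℂ γperp φperp : ℂ)))*he
      + (2*c*c)*hbb + hcc
  -- denominator
  have hden : (proj ψ * ρ).trace = 1/2 := by
    rw [hρ, mul_add, mul_smul_comm, mul_smul_comm, Matrix.trace_add, Matrix.trace_smul,
      Matrix.trace_smul, trace_proj_mul, trace_proj_mul, hφψ, hψφ, P1]
    rw [smul_eq_mul, smul_eq_mul]
    push_cast
    linear_combination (-(1-(p:ℂ))/4)*Complex.I_sq
  have hd0 : ((1:ℂ) - Complex.I)/2 ≠ 0 := by simp [Complex.ext_iff]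
  -- weak value of proj γ
  have hwγ : weak φ ψ (proj γ) = (1 + Complex.I)/2 := by
    rw [weak, mulVecE_proj, inner_smul_right, hγφ, hψγ, hψφ, hcc]
    rw [div_eq_iff hd0]
    linear_combination (1/4 : ℂ)*Complex.I_sq
  -- gweak of proj γ
  have hnumγ : (proj ψ * proj γ * ρ).trace
      = ((1-(p:ℂ))*(1+Complex.I) + (p:ℂ)*(1-Complex.I))/4 := by
    rw [hρ, mul_add, mul_smul_comm, mul_smul_comm, Matrix.trace_add, Matrix.trace_smul,
      Matrix.trace_smul, trace_proj_mul_mul, trace_proj_mul_mul, mulVecE_proj, mulVecE_proj,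
      inner_smul_right, inner_smul_right, hγφ, hψγ, hφψ, hφpψ, ha]
    rw [smul_eq_mul, smul_eq_mul]
    push_cast
    linear_combination ((1-(p:ℂ))*(1+Complex.I)/2 + (p:ℂ)*(1-Complex.I)/2)*hcc
      + ((p:ℂ)*c*c*((starRingEnd ℂ) (inner ℂ γperp φperp : ℂ))*(inner ℂ γperp φperp : ℂ)
          *(1-Complex.I))*he
      + ((p:ℂ)*c*c*(1-Complex.I))*hbb
  have hgwγ : gweak ρ ψ (proj γ)
      = ((1-(p:ℂ))*(1+Complex.I) + (p:ℂ)*(1-Complex.I))/2 := by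
    rw [gweak, hnumγ, hden]
    field_simp
    ring
  -- H values
  set A : ℂ := (((1 - ε * Real.sqrt 2) / 2 : ℝ) : ℂ) with hA_def
  set B : ℂ := ((ε * Real.sqrt 2 / 2 : ℝ) : ℂ) with hB_def
  have hHφ : (inner ℂ ψ (mulVecE H φ) : ℂ) = (A + 2*B) * ((1 - Complex.I)/2) := by
    simp only [hH, mulVecE_add, mulVecE_smul, mulVecE_one, mulVecE_proj, inner_add_right,
      inner_smul_right, hφφ, hψφ, hψψ]
    ring
  have hHφp : (inner ℂ ψ (mulVecE H φperp) : ℂ) = (A + B) * (inner ℂ ψ φperp : ℂ) := by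
    simp only [hH, mulVecE_add, mulVecE_smul, mulVecE_one, mulVecE_proj, inner_add_right,
      inner_smul_right, horth', hψψ]
    ring
  have hwH : weak φ ψ H = A + 2*B := by
    rw [weak, hHφ, hψφ, mul_div_assoc, div_self hd0, mul_one]
  have hnumH : (proj ψ * H * ρ).trace = ((1-(p:ℂ))*(A+2*B) + (p:ℂ)*(A+B))/2 := by
    rw [hρ, mul_add, mul_smul_comm, mul_smul_comm, Matrix.trace_add, Matrix.trace_smul,
      Matrix.trace_smul, trace_proj_mul_mul, trace_proj_mul_mul, hHφ, hHφp, hφψ]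
    rw [smul_eq_mul, smul_eq_mul]
    push_cast
    linear_combination (-(1-(p:ℂ))*(A+2*B)/4)*Complex.I_sq + ((p:ℂ)*(A+B))*P1
  have hgwH : gweak ρ ψ H = (1-(p:ℂ))*(A+2*B) + (p:ℂ)*(A+B) := by
    rw [gweak, hnumH, hden]
    field_simp
  -- real/imaginary parts
  have him1 : (weak φ ψ (proj γ)).im = 1/2 := by rw [hwγ]; simp [Complex.div_im]
  have him2 : (gweak ρ ψ (proj γ)).im = (1 - 2*p)/2 := by
    rw [hgwγ]
    simp [Complex.div_im, Complex.add_im, Complex.mul_im]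
    ring
  have hre1 : (weak φ ψ H).re = (1 - ε * Real.sqrt 2)/2 + 2*(ε * Real.sqrt 2/2) := by
    rw [hwH, hA_def, hB_def]
    norm_cast
  have hre2 : (gweak ρ ψ H).re
      = (1-p)*((1 - ε * Real.sqrt 2)/2 + 2*(ε * Real.sqrt 2/2))
        + p*((1 - ε * Real.sqrt 2)/2 + ε * Real.sqrt 2/2) := by
    rw [hgwH, hA_def, hB_def]
    norm_cast
  have hL : |(weak φ ψ (proj γ)).im - (gweak ρ ψ (proj γ)).im| = p := by
    rw [him1, him2]
    rw [show (1/2 - (1-2*p)/2 : ℝ) = p by ring, abs_of_nonneg hp0]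
  have hR : |(weak φ ψ H).re - (gweak ρ ψ H).re| = p * Real.sqrt 2 / 2 := by
    rw [hre1, hre2]
    rcases hε with h | h <;> subst h
    · rw [show ((1 - 1 * Real.sqrt 2)/2 + 2*(1 * Real.sqrt 2/2)
          - ((1-p)*((1 - 1 * Real.sqrt 2)/2 + 2*(1 * Real.sqrt 2/2))
            + p*((1 - 1 * Real.sqrt 2)/2 + 1 * Real.sqrt 2/2)) : ℝ)
          = p * Real.sqrt 2 / 2 by ring]
      exact abs_of_nonneg (by positivity)
    · rw [show ((1 - (-1) * Real.sqrt 2)/2 + 2*((-1) * Real.sqrt 2/2)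
          - ((1-p)*((1 - (-1) * Real.sqrt 2)/2 + 2*((-1) * Real.sqrt 2/2))
            + p*((1 - (-1) * Real.sqrt 2)/2 + (-1) * Real.sqrt 2/2)) : ℝ)
          = -(p * Real.sqrt 2 / 2) by ring]
      rw [abs_neg]
      exact abs_of_nonneg (by positivity)
  rw [hL, hR]
  constructor
  · nlinarith
  · constructor
    · intro h
      nlinarith
    · intro h
      subst h
      norm_num
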